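/- Let K be a field of characteristic 0, let R be a commutative K-algebra, let δ be a locally nilpotent K-derivation of R, and let d be any K-derivation of R. If A = ker δ is a finitely generated K-algebra, then for each t ≥ 0 the A-submodule of R generated by d^t(A) is a finitely generated A-module. -/

import Mathlib

open Finset

/-- Iterated Leibniz, membership form. -/
lemma iter_leibniz_mem {K R : Type*} [CommRing K] [CommRing R] [Algebra K R]
    (d : Derivation K R R) (s : ℕ) (x y : R) :
    ((d.toLinearMap : Module.End K R) ^ s) (x * y) ∈
      Submodule.span ℕ {r : R | ∃ i j, i + j = s ∧
        r = ((d.toLinearMap : Module.End K R) ^ i) x * ((d.toLinearMap : Module.End K R) ^ j) y} := by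
  induction s with
  | zero =>
    exact Submodule.subset_span ⟨0, 0, rfl, by simp⟩
  | succ s ih =>
    have hpow : ∀ (m : ℕ) (z : R), d.toLinearMap (((d.toLinearMap : Module.End K R) ^ m) z)
        = ((d.toLinearMap : Module.End K R) ^ (m+1)) z := by
      intro m z
      rw [pow_succ' (d.toLinearMap : Module.End K R) m]; rfl
    have hstep : ((d.toLinearMap : Module.End K R) ^ (s+1)) (x * y)
        = d.toLinearMap (((d.toLinearMap : Module.End K R) ^ s) (x * y)) := (hpow s _).symm
    rw [hstep]
    refine Submodule.span_induction ?_ ?_ ?_ ?_ ih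
    · rintro r ⟨i, j, hij, rfl⟩
      have : d.toLinearMap (((d.toLinearMap : Module.End K R) ^ i) x *
          ((d.toLinearMap : Module.End K R) ^ j) y)
          = ((d.toLinearMap : Module.End K R) ^ i) x * ((d.toLinearMap : Module.End K R) ^ (j+1)) y
            + ((d.toLinearMap : Module.End K R) ^ (i+1)) x * ((d.toLinearMap : Module.End K R) ^ j) y := by
        have := d.leibniz (((d.toLinearMap : Module.End K R) ^ i) x)
          (((d.toLinearMap : Module.End K R) ^ j) y)
        rw [show (d : R → R) = (d.toLinearMap : R → R) from rfl] at this
        simp only [smul_eq_mul] at this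
        rw [this, hpow, hpow]
        ring
      rw [this]
      exact add_mem (Submodule.subset_span ⟨i, j+1, by omega, rfl⟩)
        (Submodule.subset_span ⟨i+1, j, by omega, rfl⟩)
    · simp
    · intro a b _ _ ha hb; rw [map_add]; exact add_mem ha hb
    · intro n a _ ha
      rw [map_nsmul]; exact Submodule.smul_mem _ n ha

/-- If `δ` is a locally nilpotent derivation of a commutative `K`-algebra `R` whose
algebra of constants `A = ker δ` is a finitely generated `K`-algebra, and `d` is any
derivation of `R`, then for each `t` the `A`-submodule of `R` generated by `d^t(A)`
is a finitely generated `A`-module. -/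
theorem stmt_7 (K R : Type*) [Field K] [CharZero K] [CommRing R] [Algebra K R]
    (δ : Derivation K R R)
    (hln : ∀ f : R, ∃ N : ℕ, ((δ.toLinearMap : _) ^ N) f = 0)
    (A : Subalgebra K R) (hA : ∀ x : R, x ∈ A ↔ δ x = 0) (hAfg : A.FG)
    (d : Derivation K R R) (t : ℕ) :
    (Submodule.span A (((d.toLinearMap : _) ^ t) '' (A : Set R))).FG := by
  classical
  obtain ⟨S, hS⟩ := hAfg
  set D : Module.End K R := d.toLinearMap with hD
  -- the finite generating sets
  let G : ℕ → Finset R := fun n => Nat.rec {1}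
    (fun _ Gn => Gn ∪ ((Finset.range (t+1) ×ˢ S ×ˢ Gn).image
      fun q => (D ^ q.1) q.2.1 * q.2.2)) n
  have hG0 : G 0 = {1} := rfl
  have hGsucc : ∀ n, G (n+1) = G n ∪ ((Finset.range (t+1) ×ˢ S ×ˢ G n).image
      fun q => (D ^ q.1) q.2.1 * q.2.2) := fun n => rfl
  have hGmono : ∀ n, G n ⊆ G (n+1) := by
    intro n; rw [hGsucc]; exact Finset.subset_union_left
  have hone : ∀ n, (1 : R) ∈ G n := by
    intro n; induction n with
    | zero => simp [hG0]
    | succ n ih => exact hGmono n ih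
  have hGmul : ∀ a b, ∀ g ∈ G a, ∀ g' ∈ G b, g * g' ∈ G (a + b) := by
    intro a
    induction a with
    | zero =>
      intro b g hg g' hg'
      rw [hG0, Finset.mem_singleton] at hg
      subst hg; rw [one_mul, zero_add]; exact hg'
    | succ a ih =>
      intro b g hg g' hg'
      rw [hGsucc, Finset.mem_union] at hg
      rcases hg with hg | hg
      · have := ih b g hg g' hg'
        have hle : G (a + b) ⊆ G (a + 1 + b) := by
          have : a + 1 + b = (a + b) + 1 := by omega
          rw [this]; exact hGmono _
        exact hle this
      · rw [Finset.mem_image] at hg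
        obtain ⟨q, hq, rfl⟩ := hg
        rw [Finset.mem_product] at hq
        obtain ⟨hq1, hq2⟩ := hq
        rw [Finset.mem_product] at hq2
        have hrec : (D ^ q.1) q.2.1 * q.2.2 * g' = (D ^ q.1) q.2.1 * (q.2.2 * g') := by ring
        rw [hrec]
        have hmem : q.2.2 * g' ∈ G (a + b) := ih b _ hq2.2 g' hg'
        have : a + 1 + b = (a + b) + 1 := by omega
        rw [this, hGsucc, Finset.mem_union]
        right
        exact Finset.mem_image.mpr ⟨(q.1, q.2.1, q.2.2 * g'), by
          rw [Finset.mem_product]; exact ⟨hq1, Finset.mem_product.mpr ⟨hq2.1, hmem⟩⟩, rfl⟩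
  -- the modules
  let Q : ℕ → Submodule A R := fun n => Submodule.span A (SetLike.coe (G n))
  have hAmem : ∀ (x : R), x ∈ A → ∀ n, x ∈ Q n := by
    intro x hx n
    have h1 : (1 : R) ∈ Q n := Submodule.subset_span (by exact_mod_cast hone n)
    have := Submodule.smul_mem (Q n) (⟨x, hx⟩ : A) h1
    rwa [show (⟨x, hx⟩ : A) • (1 : R) = x from by
      rw [Algebra.smul_def, mul_one]; rfl] at this
  have hQmul : ∀ a b, ∀ x ∈ Q a, ∀ y ∈ Q b, x * y ∈ Q (a + b) := by
    intro a b x hx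
    refine Submodule.span_induction ?_ ?_ ?_ ?_ hx
    · intro g hg y hy
      refine Submodule.span_induction ?_ ?_ ?_ ?_ hy
      · intro g' hg'
        exact Submodule.subset_span (by exact_mod_cast hGmul a b g (by exact_mod_cast hg) g' (by exact_mod_cast hg'))
      · simp
      · intro u v _ _ hu hv; rw [mul_add]; exact add_mem hu hv
      · intro c u _ hu; rw [mul_smul_comm]; exact Submodule.smul_mem _ c hu
    · intro y _; rw [zero_mul]; exact zero_mem _
    · intro u v _ _ hu hv y hy; rw [add_mul]; exact add_mem (hu y hy) (hv y hy)
    · intro c u _ hu y hy; rw [smul_mul_assoc]; exact Submodule.smul_mem _ c (hu y hy)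
  -- main claim
  have main : ∀ x ∈ Algebra.adjoin K (S : Set R), ∀ s, s ≤ t → (D ^ s) x ∈ Q s := by
    intro x hx'
    induction hx' using Algebra.adjoin_induction with
    | mem h hh =>
      intro s hst
      cases s with
      | zero =>
        simpa using hAmem h (hS ▸ Algebra.subset_adjoin hh) 0
      | succ m =>
        have : (D ^ (m+1)) h = (D ^ (m+1)) h * 1 := (mul_one _).symm
        rw [this]
        refine Submodule.subset_span ?_
        rw [hGsucc]
        refine Finset.mem_coe.mpr (Finset.mem_union_right _ (Finset.mem_image.mpr
          ⟨(m+1, h, 1), ?_, rfl⟩))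
        rw [Finset.mem_product]
        exact ⟨Finset.mem_range.mpr (by omega), Finset.mem_product.mpr ⟨hh, hone m⟩⟩
    | algebraMap c =>
      intro s hst
      cases s with
      | zero => simpa using hAmem _ (A.algebraMap_mem c) 0
      | succ m =>
        have : (D ^ (m+1)) (algebraMap K R c) = (D ^ m) (D (algebraMap K R c)) := by
          rw [pow_succ, Module.End.mul_apply]
        rw [this, show D (algebraMap K R c) = 0 from d.map_algebraMap c, map_zero]
        exact zero_mem _
    | add u v hu hv ihu ihv =>
      intro s hst
      rw [map_add]; exact add_mem (ihu s hst) (ihv s hst)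
    | mul u v hu hv ihu ihv =>
      intro s hst
      have hmem := iter_leibniz_mem d s u v
      rw [← hD] at hmem
      have hsub : Submodule.span ℕ {r : R | ∃ i j, i + j = s ∧ r = (D ^ i) u * (D ^ j) v}
          ≤ (Q s).restrictScalars ℕ := by
        rw [Submodule.span_le]
        rintro r ⟨i, j, hij, rfl⟩
        have h1 : (D ^ i) u ∈ Q i := ihu i (by omega)
        have h2 : (D ^ j) v ∈ Q j := ihv j (by omega)
        have := hQmul i j _ h1 _ h2
        rw [hij] at this
        exact this
      exact hsub hmem
  -- conclude
  have hspan_le : Submodule.span A ((D ^ t) '' (A : Set R)) ≤ Q t := by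
    rw [Submodule.span_le]
    rintro r ⟨a, ha, rfl⟩
    exact main a (by rw [hS]; exact ha) t le_rfl
  have hFT : Algebra.FiniteType K A := (Subalgebra.fg_iff_finiteType A).mp ⟨S, hS⟩
  have hNo : IsNoetherianRing A := Algebra.FiniteType.isNoetherianRing K A
  have hQfg : (Q t).FG := ⟨G t, rfl⟩
  have hNoQ : IsNoetherian A (Q t) := isNoetherian_of_fg_of_noetherian _ hQfg
  have hfg' : (Submodule.comap (Q t).subtype (Submodule.span A ((D ^ t) '' (A : Set R)))).FG :=
    IsNoetherian.noetherian _
  have heq : Submodule.map (Q t).subtype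
      (Submodule.comap (Q t).subtype (Submodule.span A ((D ^ t) '' (A : Set R))))
      = Submodule.span A ((D ^ t) '' (A : Set R)) := by
    rw [Submodule.map_comap_subtype]
    exact inf_eq_right.mpr hspan_le
  have := hfg'.map (Q t).subtype
  rwa [heq] at this
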